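/- Let R be a reduced commutative unital ring and p ∈ R[x] a nonconstant prime polynomial whose leading coefficient is regular. Then the logical powers of p are exactly the positive powers of p. -/

import Mathlib

def IsLogPow {S : Type*} [CommRing S] (p f : S) : Prop :=
  p ∣ f ∧ (p - 1) ∣ (f - 1) ∧ ∀ g : S, g ∣ f → IsUnit g ∨ p ∣ g

open Polynomial

private lemma dvd_pow_cases {R : Type*} [CommRing R] {p : R[X]}
    (hp : Prime p) (hlc : p.leadingCoeff ∈ nonZeroDivisors R) :
    ∀ n : ℕ, ∀ g : R[X], g ∣ p ^ n → IsUnit g ∨ p ∣ g := by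
  have hpnz : p ∈ nonZeroDivisors R[X] := mem_nonZeroDivisors_of_leadingCoeff hlc
  intro n
  induction n with
  | zero => intro g hg; left; exact isUnit_of_dvd_one (by simpa using hg)
  | succ n ih =>
    intro g hg
    by_cases hpg : p ∣ g
    · exact Or.inr hpg
    · obtain ⟨h, hh⟩ := hg
      have : p ∣ g * h := ⟨p ^ n, by rw [← hh, pow_succ, mul_comm]⟩
      rcases hp.2.2 _ _ this with h1 | h2
      · exact absurd h1 hpg
      · obtain ⟨h', rfl⟩ := h2
        apply ih
        refine ⟨h', ?_⟩
        have : p * p ^ n = p * (g * h') := by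
          rw [← pow_succ', hh]; ring
        exact (mul_cancel_left_mem_nonZeroDivisors hpnz).mp this

private lemma factor_aux {R : Type*} [CommRing R] {p : R[X]}
    (hdeg : 0 < p.natDegree) (hlc : p.leadingCoeff ∈ nonZeroDivisors R) :
    ∀ N : ℕ, ∀ f : R[X], f.natDegree ≤ N → f ≠ 0 →
      (∀ g : R[X], g ∣ f → IsUnit g ∨ p ∣ g) →
      ∃ n : ℕ, ∃ u : R[X], IsUnit u ∧ f = p ^ n * u := by
  intro N
  induction N with
  | zero =>
    intro f hfN hf0 hcond
    rcases hcond f dvd_rfl with hu | hpf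
    · exact ⟨0, f, hu, by simp⟩
    · exfalso
      obtain ⟨g, rfl⟩ := hpf
      have hg0 : g ≠ 0 := by rintro rfl; simp at hf0
      have hne : p.leadingCoeff * g.leadingCoeff ≠ 0 := by
        intro h
        exact leadingCoeff_ne_zero.mpr hg0 (hlc.2 _ (by rwa [mul_comm] at h))
      have := natDegree_mul' hne
      omega
  | succ N ih =>
    intro f hfN hf0 hcond
    rcases hcond f dvd_rfl with hu | hpf
    · exact ⟨0, f, hu, by simp⟩
    · obtain ⟨g, rfl⟩ := hpf
      have hg0 : g ≠ 0 := by rintro rfl; simp at hf0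
      have hne : p.leadingCoeff * g.leadingCoeff ≠ 0 := by
        intro h
        exact leadingCoeff_ne_zero.mpr hg0 (hlc.2 _ (by rwa [mul_comm] at h))
      have hdd := natDegree_mul' hne
      have hgN : g.natDegree ≤ N := by omega
      obtain ⟨n, u, hu, hgu⟩ := ih g hgN hg0
        (fun h hh => hcond h (hh.trans (Dvd.intro_left p rfl)))
      exact ⟨n + 1, u, hu, by rw [hgu, pow_succ]; ring⟩

open Polynomial in
theorem stmt_19 {R : Type*} [CommRing R] [IsReduced R]
    (p : R[X]) (hdeg : 0 < p.natDegree) (hp : Prime p)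
    (hlc : p.leadingCoeff ∈ nonZeroDivisors R) :
    ∀ f : R[X], IsLogPow p f ↔ ∃ n : ℕ, 1 ≤ n ∧ f = p ^ n := by
  have hpm1deg : (p - 1).natDegree = p.natDegree := by
    have : (1 : R[X]) = C 1 := by simp
    rw [this, natDegree_sub_C]
  have hpm1lc : (p - 1).leadingCoeff = p.leadingCoeff := by
    unfold leadingCoeff
    rw [hpm1deg]
    have : (1 : R[X]) = C 1 := by simp
    rw [this, coeff_sub, coeff_C, if_neg (by omega), sub_zero]
  have hpm1nu : ¬ IsUnit (p - 1) :=
    not_isUnit_of_natDegree_pos_of_isReduced _ (by omega)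
  intro f
  constructor
  · rintro ⟨h1, h2, h3⟩
    -- f ≠ 0
    have hf0 : f ≠ 0 := by
      rintro rfl
      apply hpm1nu
      exact isUnit_of_dvd_unit (by simpa using h2) (by simp)
    obtain ⟨n, u, hu, rfl⟩ := factor_aux hdeg hlc f.natDegree f le_rfl hf0 h3
    -- n ≥ 1
    have hn : 1 ≤ n := by
      rcases Nat.eq_zero_or_pos n with rfl | h
      · exfalso
        apply hp.not_unit
        simp only [pow_zero, one_mul] at h1
        exact isUnit_of_dvd_unit h1 hu
      · exact h
    -- u is a constant unit
    have hudeg : u.natDegree = 0 := by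
      by_contra h
      exact not_isUnit_of_natDegree_pos_of_isReduced u (by omega) hu
    obtain ⟨c, hc⟩ : ∃ c : R, u = C c := ⟨u.coeff 0, eq_C_of_natDegree_eq_zero hudeg⟩
    subst hc
    -- show c = 1
    have hdvd : (p - 1) ∣ C (c - 1) := by
      have d1 : (p - 1) ∣ p ^ n - 1 := by
        simpa using sub_dvd_pow_sub_pow p 1 n
      have d2 : (p - 1) ∣ (p ^ n - 1) * C c := d1.mul_right _
      have : C (c - 1) = (p ^ n * C c - 1) - (p ^ n - 1) * C c + (p - 1) * 0 := by
        simp [map_sub, map_one]; ring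
      rw [this]
      exact dvd_add (dvd_sub h2 d2) (Dvd.intro _ rfl)
    have hc1 : c = 1 := by
      by_contra hne
      obtain ⟨q, hq⟩ := hdvd
      have hq0 : q ≠ 0 := by
        rintro rfl
        simp only [mul_zero] at hq
        exact hne (by simpa [sub_eq_zero] using (C_eq_zero.mp hq))
      have hmul : (p - 1).leadingCoeff * q.leadingCoeff ≠ 0 := by
        intro h
        rw [hpm1lc] at h
        exact leadingCoeff_ne_zero.mpr hq0 (hlc.2 _ (by rwa [mul_comm] at h))
      have := natDegree_mul' hmul
      rw [← hq, natDegree_C, hpm1deg] at this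
      omega
    exact ⟨n, hn, by simp [hc1]⟩
  · rintro ⟨n, hn, rfl⟩
    refine ⟨dvd_pow_self p (by omega), ?_, dvd_pow_cases hp hlc n⟩
    simpa using sub_dvd_pow_sub_pow p 1 n
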